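/- Let N ≥ 1 and let a : Fin N → ℝ satisfy a i > 0 for all i. Then the function g(x) = (∑_{i} a_i / √(x_i))² is convex on the open positive orthant {x : Fin N → ℝ | ∀ i, 0 < x i}. -/

import Mathlib

open Set

lemma aux_convexOn_sum {ι E : Type*} [AddCommMonoid E] [Module ℝ E] {s : Set E}
    (hs : Convex ℝ s) (t : Finset ι) (f : ι → E → ℝ)
    (h : ∀ i ∈ t, ConvexOn ℝ s (f i)) :
    ConvexOn ℝ s (fun x => ∑ i ∈ t, f i x) := by
  classical
  induction t using Finset.induction with
  | empty => simpa using convexOn_const 0 hs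
  | insert _ _ hi ih =>
    simp only [Finset.sum_insert hi]
    exact (h _ (Finset.mem_insert_self _ _)).add
      (ih fun i hit => h i (Finset.mem_insert_of_mem hit))

lemma aux_sqrt_image : Real.sqrt '' Ioi (0 : ℝ) = Ioi 0 := by
  ext x
  constructor
  · rintro ⟨t, ht, rfl⟩
    exact Real.sqrt_pos.2 ht
  · intro hx
    exact ⟨x ^ 2, mem_Ioi.2 (pow_pos (mem_Ioi.1 hx) 2), Real.sqrt_sq hx.le⟩

lemma aux_convexOn_inv_sqrt : ConvexOn ℝ (Ioi (0 : ℝ)) (fun t => (Real.sqrt t)⁻¹) := by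
  have hg : ConvexOn ℝ (Real.sqrt '' Ioi (0 : ℝ)) (fun y : ℝ => y⁻¹) := by
    rw [aux_sqrt_image]
    have := (strictConvexOn_zpow (m := -1) (by decide) (by decide)).convexOn
    simpa using this
  have hf : ConcaveOn ℝ (Ioi (0 : ℝ)) Real.sqrt :=
    (Real.strictConcaveOn_sqrt.concaveOn).subset Ioi_subset_Ici_self (convex_Ioi 0)
  have hanti : AntitoneOn (fun y : ℝ => y⁻¹) (Real.sqrt '' Ioi (0 : ℝ)) := by
    rw [aux_sqrt_image]
    intro x hx y hy hxy
    exact inv_anti₀ hx hxy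
  exact hg.comp_concaveOn hf hanti

/-- For `N ≥ 1` and `a : Fin N → ℝ` with `a i > 0` for all `i`, the
function `g(x) = (∑ i, a i / √(x i))²` is convex on the open positive orthant. -/
theorem stmt_2 (N : ℕ) (hN : 1 ≤ N) (a : Fin N → ℝ) (ha : ∀ i, 0 < a i) :
    ConvexOn ℝ {x : Fin N → ℝ | ∀ i, 0 < x i}
      (fun x : Fin N → ℝ => (∑ i, a i / Real.sqrt (x i)) ^ 2) := by
  set S : Set (Fin N → ℝ) := {x : Fin N → ℝ | ∀ i, 0 < x i} with hS
  have hSconv : Convex ℝ S := by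
    have : S = Set.pi Set.univ (fun _ : Fin N => Ioi (0 : ℝ)) := by
      ext x; simp [hS, Set.mem_pi]
    rw [this]
    exact convex_pi fun i _ => convex_Ioi 0
  -- each term is convex
  have hterm : ∀ i : Fin N, ConvexOn ℝ S (fun x : Fin N → ℝ => a i / Real.sqrt (x i)) := by
    intro i
    have hproj : ConvexOn ℝ S (fun x : Fin N → ℝ => (Real.sqrt (x i))⁻¹) := by
      have := aux_convexOn_inv_sqrt.comp_affineMap
        ((LinearMap.proj i : (Fin N → ℝ) →ₗ[ℝ] ℝ).toAffineMap)
      refine ConvexOn.subset ?_ (fun x hx => hx i) hSconv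
      exact this
    have := hproj.smul (ha i).le
    simpa [smul_eq_mul, div_eq_mul_inv] using this
  have hsum : ConvexOn ℝ S (fun x : Fin N → ℝ => ∑ i, a i / Real.sqrt (x i)) :=
    aux_convexOn_sum hSconv Finset.univ _ (fun i _ => hterm i)
  have hnn : ∀ ⦃x⦄, x ∈ S → 0 ≤ ∑ i, a i / Real.sqrt (x i) := by
    intro x hx
    exact Finset.sum_nonneg fun i _ =>
      div_nonneg (ha i).le (Real.sqrt_nonneg _)
  refine ⟨hSconv, fun x hx y hy p q hp hq hpq => ?_⟩
  have hxy : p • x + q • y ∈ S := hSconv hx hy hp hq hpq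
  have key := hsum.2 hx hy hp hq hpq
  have h1 := hnn hx
  have h2 := hnn hy
  have h3 := hnn hxy
  simp only [smul_eq_mul] at key ⊢
  nlinarith [sq_nonneg (∑ i, a i / Real.sqrt (x i) - ∑ i, a i / Real.sqrt (y i)),
    mul_nonneg hp hq, sq_nonneg (∑ i, a i / Real.sqrt ((p • x + q • y) i))]
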